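/- Let D be a closed disk of radius r ≥ 1/√2 in the plane. Then D ∩ ℤ² is nonempty and lattice-connected. -/

import Mathlib

/-- The embedding of the integer lattice `ℤ × ℤ` into the Euclidean plane. -/
noncomputable def latticeEmbed (z : ℤ × ℤ) : EuclideanSpace ℝ (Fin 2) :=
  (EuclideanSpace.equiv (Fin 2) ℝ).symm ![(z.1 : ℝ), (z.2 : ℝ)]

/-- A set `S ⊆ ℤ²` is lattice-connected if the subgraph of the lattice graph
(vertices `ℤ²`, edges between lattice points at distance `1`) induced on `S`
is connected. -/
def LatticeConnected (S : Set (ℤ × ℤ)) : Prop :=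
  ∀ z ∈ S, ∀ w ∈ S, Relation.ReflTransGen
    (fun u v => u ∈ S ∧ v ∈ S ∧ (v.1 - u.1) ^ 2 + (v.2 - u.2) ^ 2 = 1) z w

lemma latticeEmbed_mem_iff (o : EuclideanSpace ℝ (Fin 2)) (r : ℝ) (hr : 0 ≤ r) (z : ℤ × ℤ) :
    latticeEmbed z ∈ Metric.closedBall o r ↔
      ((z.1:ℝ) - o 0)^2 + ((z.2:ℝ) - o 1)^2 ≤ r ^ 2 := by
  rw [Metric.mem_closedBall, EuclideanSpace.dist_eq, Fin.sum_univ_two, Real.sqrt_le_iff,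
    and_iff_right hr]
  simp [latticeEmbed, Real.dist_eq, sq_abs]

/-- For a closed disk `D` of radius `r ≥ 1/√2`, the set `D ∩ ℤ²` is nonempty
and lattice-connected. -/
theorem stmt13 (o : EuclideanSpace ℝ (Fin 2)) (r : ℝ) (hr : 1 / Real.sqrt 2 ≤ r)
    (S : Set (ℤ × ℤ)) (hS : S = {z | latticeEmbed z ∈ Metric.closedBall o r}) :
    S.Nonempty ∧ LatticeConnected S := by
  have hr0 : (0:ℝ) ≤ r := le_trans (by positivity) hr
  have hr2 : (1:ℝ)/2 ≤ r ^ 2 := by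
    have h2 : Real.sqrt 2 * Real.sqrt 2 = 2 := Real.mul_self_sqrt (by norm_num)
    have hs : (0:ℝ) < Real.sqrt 2 := by positivity
    have hm : (1 / Real.sqrt 2) * (1 / Real.sqrt 2) ≤ r * r :=
      mul_le_mul hr hr (by positivity) hr0
    have he : (1 / Real.sqrt 2) * (1 / Real.sqrt 2) = 1/2 := by
      rw [div_mul_div_comm, one_mul, h2]
    rw [pow_two]; linarith
  have memiff : ∀ z : ℤ × ℤ, z ∈ S ↔ ((z.1:ℝ) - o 0)^2 + ((z.2:ℝ) - o 1)^2 ≤ r ^ 2 := by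
    intro z; rw [hS]; exact latticeEmbed_mem_iff o r hr0 z
  obtain ⟨c1, hc1⟩ : ∃ c1 : ℤ, c1 = round (o 0) := ⟨_, rfl⟩
  obtain ⟨c2, hc2⟩ : ∃ c2 : ℤ, c2 = round (o 1) := ⟨_, rfl⟩
  have hb0 : |o 0 - (c1 : ℝ)| ≤ 1/2 := by rw [hc1]; exact abs_sub_round (o 0)
  have hb1 : |o 1 - (c2 : ℝ)| ≤ 1/2 := by rw [hc2]; exact abs_sub_round (o 1)
  rw [abs_le] at hb0 hb1
  have hcS : (c1, c2) ∈ S := by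
    rw [memiff]
    nlinarith [hb0.1, hb0.2, hb1.1, hb1.2]
  have key : ∀ n : ℕ, ∀ z : ℤ × ℤ, z ∈ S →
      (z.1 - c1).natAbs + (z.2 - c2).natAbs = n →
      Relation.ReflTransGen
        (fun u v => u ∈ S ∧ v ∈ S ∧ (v.1 - u.1) ^ 2 + (v.2 - u.2) ^ 2 = 1) z (c1, c2) := by
    intro n
    induction n with
    | zero =>
      intro z _ h
      have : z = (c1, c2) := by
        have h1 : z.1 = c1 := by omega
        have h2 : z.2 = c2 := by omega
        exact Prod.ext h1 h2
      rw [this]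
    | succ n ih =>
      intro z hz h
      have hzr := (memiff z).mp hz
      rcases lt_trichotomy z.1 c1 with h1 | h1 | h1
      · -- move right
        have hle : (z.1 : ℝ) ≤ o 0 - 1/2 := by
          have h' : (z.1 : ℝ) + 1 ≤ (c1 : ℝ) := by exact_mod_cast by omega
          linarith [hb0.2]
        have hz' : (z.1 + 1, z.2) ∈ S := by rw [memiff]; push_cast; nlinarith
        exact Relation.ReflTransGen.head ⟨hz, hz', by simp⟩ (ih _ hz' (by simp; omega))
      · rcases lt_trichotomy z.2 c2 with h2 | h2 | h2
        · -- move up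
          have hle : (z.2 : ℝ) ≤ o 1 - 1/2 := by
            have h' : (z.2 : ℝ) + 1 ≤ (c2 : ℝ) := by exact_mod_cast by omega
            linarith [hb1.2]
          have hz' : (z.1, z.2 + 1) ∈ S := by rw [memiff]; push_cast; nlinarith
          exact Relation.ReflTransGen.head ⟨hz, hz', by simp⟩ (ih _ hz' (by simp; omega))
        · exfalso; omega
        · -- move down
          have hle : o 1 + 1/2 ≤ (z.2 : ℝ) := by
            have h' : (c2 : ℝ) + 1 ≤ (z.2 : ℝ) := by exact_mod_cast by omega
            linarith [hb1.1]
          have hz' : (z.1, z.2 - 1) ∈ S := by rw [memiff]; push_cast; nlinarith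
          exact Relation.ReflTransGen.head ⟨hz, hz', by ring_nf⟩ (ih _ hz' (by simp; omega))
      · -- move left
        have hle : o 0 + 1/2 ≤ (z.1 : ℝ) := by
          have h' : (c1 : ℝ) + 1 ≤ (z.1 : ℝ) := by exact_mod_cast by omega
          linarith [hb0.1]
        have hz' : (z.1 - 1, z.2) ∈ S := by rw [memiff]; push_cast; nlinarith
        exact Relation.ReflTransGen.head ⟨hz, hz', by ring_nf⟩ (ih _ hz' (by simp; omega))
  refine ⟨⟨(c1, c2), hcS⟩, ?_⟩
  intro z hz w hw
  have hsymm : Symmetric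
      (fun (u v : ℤ × ℤ) => u ∈ S ∧ v ∈ S ∧ (v.1 - u.1) ^ 2 + (v.2 - u.2) ^ 2 = 1) := by
    rintro u v ⟨hu, hv, he⟩
    exact ⟨hv, hu, by linear_combination he⟩
  exact (key _ z hz rfl).trans
    ((@Relation.ReflTransGen.symmetric _ _ ⟨fun _ _ h => hsymm h⟩).symm _ _ (key _ w hw rfl))
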